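/- Let (X, 𝒜, μ) be a complete semi-finite measure space. Then the following are equivalent: (a) for every A ⊆ X, if A ∩ F ∈ 𝒜 for every F ∈ 𝒜 with μ(F) < ∞, then A ∈ 𝒜; (b) the MSN (X, 𝒜, 𝒩_μ) is locally determined, i.e. for every 𝒩_μ-generating collection ℰ ⊆ 𝒜 and every A ⊆ X, if A ∩ E ∈ 𝒜 for every E ∈ ℰ then A ∈ 𝒜. -/

import Mathlib

open Set MeasureTheory ENNReal

namespace MSNPaper

variable {X Y : Type*}

/-- `A` is a σ-algebra of subsets of the carrier set `Z`. -/
def IsSigmaAlgebraOn (Z : Set X) (A : Set (Set X)) : Prop :=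
  (∀ s ∈ A, s ⊆ Z) ∧ ∅ ∈ A ∧ (∀ s ∈ A, Z \ s ∈ A) ∧
    ∀ f : ℕ → Set X, (∀ n, f n ∈ A) → (⋃ n, f n) ∈ A

/-- `N` is a σ-ideal of the σ-algebra `A`. -/
def IsSigmaIdeal (A N : Set (Set X)) : Prop :=
  N ⊆ A ∧ ∅ ∈ N ∧ (∀ s ∈ A, ∀ t ∈ N, s ⊆ t → s ∈ N) ∧
    ∀ f : ℕ → Set X, (∀ n, f n ∈ N) → (⋃ n, f n) ∈ N

/-- A measurable space with negligibles (MSN) on the carrier set `Z`. -/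
def IsMSN (Z : Set X) (A N : Set (Set X)) : Prop :=
  IsSigmaAlgebraOn Z A ∧ IsSigmaIdeal A N

/-- The MSN is saturated: every subset of a negligible set is negligible. -/
def Saturated (N : Set (Set X)) : Prop :=
  ∀ s t : Set X, s ⊆ t → t ∈ N → s ∈ N

/-- `U` is an `N`-essential upper bound of the collection `E`. -/
def IsEssUB (N E : Set (Set X)) (U : Set X) : Prop :=
  ∀ e ∈ E, e \ U ∈ N

/-- `S` is an `N`-essential supremum of the collection `E ⊆ A`. -/
def IsEssSup (A N E : Set (Set X)) (S : Set X) : Prop :=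
  S ∈ A ∧ IsEssUB N E S ∧ ∀ U ∈ A, IsEssUB N E U → S \ U ∈ N

/-- Every collection of measurable sets admits an essential supremum. -/
def Localizable (A N : Set (Set X)) : Prop :=
  ∀ E ⊆ A, ∃ S, IsEssSup A N E S

/-- The members of `E` pairwise intersect negligibly. -/
def AlmostDisjointed (N E : Set (Set X)) : Prop :=
  E.Pairwise fun e e' => e ∩ e' ∈ N

/-- Countable chain condition: almost disjointed families of non-negligible
measurable sets are countable. -/
def CCC (A N : Set (Set X)) : Prop :=
  ∀ E : Set (Set X), E ⊆ A → (∀ e ∈ E, e ∉ N) → AlmostDisjointed N E → E.Countable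

/-- Local determination for an MSN with carrier `Z`. -/
def LocallyDetermined (Z : Set X) (A N : Set (Set X)) : Prop :=
  ∀ E ⊆ A, IsEssSup A N E Z → ∀ s ⊆ Z, (∀ e ∈ E, s ∩ e ∈ A) → s ∈ A

/-- Trace of a collection of sets on a subset `Z`. -/
def Sub (A : Set (Set X)) (Z : Set X) : Set (Set X) := (· ∩ Z) '' A


/-- For a complete semi-finite measure space, local determination in the sense of
measure spaces (testing with sets of finite measure) is equivalent to local
determination of the associated MSN (testing with arbitrary generating collections). -/
theorem locallyDetermined_iff {X : Type*} [MeasurableSpace X] (μ : Measure X)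
    (hcomplete : ∀ s t : Set X, s ⊆ t → MeasurableSet t → μ t = 0 → MeasurableSet s)
    (hsemifinite : ∀ s : Set X, MeasurableSet s → μ s = ⊤ →
      ∃ t, t ⊆ s ∧ MeasurableSet t ∧ 0 < μ t ∧ μ t < ⊤) :
    (∀ s : Set X, (∀ F : Set X, MeasurableSet F → μ F < ⊤ → MeasurableSet (s ∩ F)) →
        MeasurableSet s) ↔
      LocallyDetermined Set.univ {s : Set X | MeasurableSet s}
        {s : Set X | MeasurableSet s ∧ μ s = 0} := by
  constructor
  · -- (a) → (b)
    intro h E hE hsup s _ hse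
    apply h
    intro F hF hFfin
    -- the collection of countable unions of members of E
    set C : Set (Set X) :=
      {G | ∃ f : ℕ → Set X, (∀ n, f n ∈ insert (∅ : Set X) E) ∧ G = ⋃ n, f n} with hCdef
    have hmemC : ∀ t ∈ insert (∅ : Set X) E, MeasurableSet t := by
      rintro t (rfl | ht)
      · exact MeasurableSet.empty
      · exact hE ht
    have hCmeas : ∀ G ∈ C, MeasurableSet G := by
      rintro G ⟨f, hf, rfl⟩
      exact MeasurableSet.iUnion fun n => hmemC _ (hf n)
    have hCempty : (∅ : Set X) ∈ C :=
      ⟨fun _ => ∅, fun _ => Or.inl rfl, by simp⟩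
    have hCunion : ∀ g : ℕ → Set X, (∀ n, g n ∈ C) → (⋃ n, g n) ∈ C := by
      intro g hg
      choose f hf hfg using hg
      refine ⟨fun k => f (Nat.unpair k).1 (Nat.unpair k).2, fun k => hf _ _, ?_⟩
      ext x
      simp only [mem_iUnion]
      constructor
      · rintro ⟨n, hx⟩
        rw [hfg n] at hx
        obtain ⟨m, hm⟩ := mem_iUnion.1 hx
        exact ⟨Nat.pair n m, by simpa [Nat.unpair_pair] using hm⟩
      · rintro ⟨k, hk⟩
        exact ⟨(Nat.unpair k).1, by rw [hfg]; exact mem_iUnion.2 ⟨(Nat.unpair k).2, hk⟩⟩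
    have hCinsert : ∀ G ∈ C, ∀ e ∈ E, G ∪ e ∈ C := by
      rintro G ⟨f, hf, rfl⟩ e he
      refine ⟨fun k => Nat.rec e (fun n _ => f n) k, fun k => ?_, ?_⟩
      · cases k with
        | zero => exact Or.inr he
        | succ n => exact hf n
      · ext x
        simp only [mem_union, mem_iUnion]
        constructor
        · rintro (⟨n, hx⟩ | hx)
          · exact ⟨n + 1, hx⟩
          · exact ⟨0, hx⟩
        · rintro ⟨k, hk⟩
          cases k with
          | zero => exact Or.inr hk
          | succ n => exact Or.inl ⟨n, hk⟩
    -- the supremum of measures of F ∩ G over G ∈ C, attained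
    set c := sSup ((fun G => μ (F ∩ G)) '' C) with hc
    have hne : ((fun G => μ (F ∩ G)) '' C).Nonempty := ⟨_, mem_image_of_mem _ hCempty⟩
    obtain ⟨u, hu_mono, hu_tend, hu_mem⟩ :=
      exists_seq_tendsto_sSup hne (OrderTop.bddAbove _)
    choose g hgC hgu using fun n => (hu_mem n)
    set G := ⋃ n, g n with hGdef
    have hGC : G ∈ C := hCunion g hgC
    have hGmeas : MeasurableSet G := hCmeas G hGC
    have hle : ∀ G' ∈ C, μ (F ∩ G') ≤ c := fun G' hG' =>
      le_sSup (mem_image_of_mem _ hG')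
    have hGc : μ (F ∩ G) = c := by
      refine le_antisymm (hle G hGC) ?_
      refine le_of_tendsto hu_tend (Filter.Eventually.of_forall fun n => ?_)
      rw [← hgu n]
      exact measure_mono (inter_subset_inter_right _ (subset_iUnion g n))
    have hcfin : c < ⊤ := lt_of_le_of_lt (sSup_le (by
      rintro x ⟨G', _, rfl⟩
      exact measure_mono inter_subset_left)) hFfin
    -- for every e ∈ E, (F ∩ e) \ G is null
    have hnull : ∀ e ∈ E, μ ((F ∩ e) \ G) = 0 := by
      intro e he
      have h1 : μ (F ∩ (G ∪ e)) ≤ c := hle _ (hCinsert G hGC e he)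
      have h2 : F ∩ G ⊆ F ∩ (G ∪ e) := inter_subset_inter_right _ subset_union_left
      have h3 : μ ((F ∩ (G ∪ e)) \ (F ∩ G)) = μ (F ∩ (G ∪ e)) - μ (F ∩ G) :=
        measure_diff h2 (hF.inter hGmeas).nullMeasurableSet (hGc ▸ hcfin.ne)
      have h4 : (F ∩ e) \ G ⊆ (F ∩ (G ∪ e)) \ (F ∩ G) := by
        rintro x ⟨⟨hxF, hxe⟩, hxG⟩
        exact ⟨⟨hxF, Or.inr hxe⟩, fun hx => hxG hx.2⟩
      refine le_antisymm ?_ zero_le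
      calc μ ((F ∩ e) \ G) ≤ μ (F ∩ (G ∪ e)) - μ (F ∩ G) := le_trans (measure_mono h4) (le_of_eq h3)
        _ ≤ c - c := tsub_le_tsub h1 (le_of_eq hGc.symm)
        _ = 0 := tsub_self c
    -- F \ G is null
    have hFG : μ (F \ G) = 0 := by
      have hU : MeasurableSet (Fᶜ ∪ G) := hF.compl.union hGmeas
      have hUB : IsEssUB {s : Set X | MeasurableSet s ∧ μ s = 0} E (Fᶜ ∪ G) := by
        intro e he
        have heq : e \ (Fᶜ ∪ G) = (F ∩ e) \ G := by
          ext x; simp only [mem_diff, mem_union, mem_compl_iff, mem_inter_iff]; tauto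
        rw [heq]
        exact ⟨((hF.inter (hE he)).diff hGmeas), hnull e he⟩
      have := hsup.2.2 (Fᶜ ∪ G) hU hUB
      have heq : (Set.univ : Set X) \ (Fᶜ ∪ G) = F \ G := by
        ext x; simp only [mem_diff, mem_union, mem_compl_iff, mem_univ, true_and]; tauto
      rw [heq] at this
      exact this.2
    -- conclude : s ∩ F is measurable
    have h1 : MeasurableSet (s ∩ (F \ G)) :=
      hcomplete _ _ inter_subset_right (hF.diff hGmeas) hFG
    obtain ⟨f, hf, hfG⟩ := hGC
    have h2 : MeasurableSet (s ∩ G ∩ F) := by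
      have : s ∩ G = ⋃ n, s ∩ f n := by rw [hfG, inter_iUnion]
      rw [this]
      refine (MeasurableSet.iUnion fun n => ?_).inter hF
      rcases hf n with h0 | hmem
      · rw [h0]; simp
      · exact hse _ hmem
    have : s ∩ F = (s ∩ G ∩ F) ∪ (s ∩ (F \ G)) := by
      ext x
      simp only [mem_inter_iff, mem_union, mem_diff]
      tauto
    rw [this]
    exact h2.union h1
  · -- (b) → (a)
    intro h s hs
    set E : Set (Set X) := {F | MeasurableSet F ∧ μ F < ⊤} with hEdef
    have hEA : E ⊆ {s : Set X | MeasurableSet s} := fun F hF => hF.1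
    have hsup : IsEssSup {s : Set X | MeasurableSet s}
        {s : Set X | MeasurableSet s ∧ μ s = 0} E Set.univ := by
      refine ⟨MeasurableSet.univ, fun e _ => ?_, ?_⟩
      · show MeasurableSet (e \ Set.univ) ∧ μ (e \ Set.univ) = 0
        rw [diff_univ]
        exact ⟨MeasurableSet.empty, measure_empty⟩
      intro U hU hUB
      have hUc : μ Uᶜ = 0 := by
        by_contra hne
        rcases eq_or_ne (μ Uᶜ) ⊤ with htop | hlt
        · obtain ⟨t, hts, htm, ht0, htfin⟩ := hsemifinite Uᶜ hU.compl htop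
          have := (hUB t ⟨htm, htfin⟩).2
          have heq : t \ U = t := by
            rw [diff_eq, inter_eq_left]
            exact fun x hx => hts hx
          rw [heq] at this
          exact absurd this (ne_of_gt ht0)
        · have := (hUB Uᶜ ⟨hU.compl, lt_top_iff_ne_top.2 hlt⟩).2
          have heq : Uᶜ \ U = Uᶜ := by
            simp [diff_eq]
          rw [heq] at this
          exact hne this
      have : (Set.univ : Set X) \ U = Uᶜ := (Set.compl_eq_univ_diff U).symm
      rw [this]
      exact ⟨hU.compl, hUc⟩
    exact h E hEA hsup s (subset_univ s) (fun e he => hs e he.1 he.2)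


end MSNPaper
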